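/- Let f be a meromorphic function on ℂ such that the family of translates {f(·+h) : h ∈ ℂ} is normal (with respect to the spherical metric, uniformly on compacta) and has no constant limit functions. If f has a zero at each point aₙ and a pole at each point bₖ, then inf over n,k of |aₙ - bₖ| is strictly positive. -/

import Mathlib

open Complex Metric OnePoint Filter

/-- Finite part of a point of the Riemann sphere. -/
noncomputable def finPart (x : OnePoint ℂ) : ℂ := Option.elim x 0 id

/-- Inversion `z ↦ 1/z` on the Riemann sphere. -/
noncomputable def oinv (x : OnePoint ℂ) : OnePoint ℂ :=
  Option.elim x (((0 : ℂ) : OnePoint ℂ))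
    (fun z => if z = 0 then (∞ : OnePoint ℂ) else (((z⁻¹ : ℂ)) : OnePoint ℂ))

/-- The spherical (chordal) metric on the Riemann sphere. -/
noncomputable def sphDist (x y : OnePoint ℂ) : ℝ :=
  Option.elim x
    (Option.elim y 0 (fun w => 2 / Real.sqrt (1 + ‖w‖ ^ 2)))
    (fun z => Option.elim y (2 / Real.sqrt (1 + ‖z‖ ^ 2))
      (fun w => 2 * dist z w / (Real.sqrt (1 + ‖z‖ ^ 2) * Real.sqrt (1 + ‖w‖ ^ 2))))

/-- A map to the Riemann sphere is meromorphic: at every point either the map is finite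
and analytic, or it takes the value `∞` and its reciprocal is analytic there. -/
def MeroSphere (f : ℂ → OnePoint ℂ) : Prop :=
  ∀ z : ℂ, (f z ≠ ∞ ∧ AnalyticAt ℂ (fun w => finPart (f w)) z)
    ∨ (f z = ∞ ∧ AnalyticAt ℂ (fun w => finPart (oinv (f w))) z)

/-- The translates `f (· + h n)` converge to `g` uniformly on compacta in the spherical
metric. -/
def UnifCompLim (f : ℂ → OnePoint ℂ) (h : ℕ → ℂ) (g : ℂ → OnePoint ℂ) : Prop :=
  ∀ K : Set ℂ, IsCompact K → ∀ ε > (0 : ℝ), ∃ N : ℕ, ∀ n ≥ N, ∀ z ∈ K,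
    sphDist (f (z + h n)) (g z) < ε

/-- Yosida's class `N₁`: a meromorphic map to the Riemann sphere whose family of translates
is normal (uniformly on compacta, spherical metric) and has no constant limit function. -/
def YosidaN1 (f : ℂ → OnePoint ℂ) : Prop :=
  MeroSphere f ∧
  (∀ h : ℕ → ℂ, ∃ φ : ℕ → ℕ, StrictMono φ ∧ ∃ g : ℂ → OnePoint ℂ, UnifCompLim f (h ∘ φ) g) ∧
  (∀ h : ℕ → ℂ, ∀ g : ℂ → OnePoint ℂ, UnifCompLim f h g → ¬ ∃ c : OnePoint ℂ, g = fun _ => c)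

open Classical in
/-- Multiplicity of a zero or pole of a meromorphic map to the sphere. -/
noncomputable def multAt (f : ℂ → OnePoint ℂ) (z : ℂ) : ℕ∞ :=
  if f z = (∞ : OnePoint ℂ) then
    (if h : AnalyticAt ℂ (fun w => finPart (oinv (f w))) z then analyticOrderAt (fun w => finPart (oinv (f w))) z else 0)
  else
    (if h : AnalyticAt ℂ (fun w => finPart (f w)) z then analyticOrderAt (fun w => finPart (f w)) z else 0)

-- ===================== helpers =====================

lemma opc (x : OnePoint ℂ) : x = ∞ ∨ ∃ v : ℂ, x = (v : OnePoint ℂ) := by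
  cases x with
  | infty => exact Or.inl rfl
  | coe v => exact Or.inr ⟨v, rfl⟩

lemma sphDist_coe_coe (z w : ℂ) :
    sphDist (z : OnePoint ℂ) (w : OnePoint ℂ)
      = 2 * dist z w / (Real.sqrt (1 + ‖z‖ ^ 2) * Real.sqrt (1 + ‖w‖ ^ 2)) := rfl
lemma sphDist_coe_infty (z : ℂ) : sphDist (z : OnePoint ℂ) ∞ = 2 / Real.sqrt (1 + ‖z‖ ^ 2) := rfl
lemma sphDist_infty_coe (w : ℂ) :
    sphDist (∞ : OnePoint ℂ) (w : OnePoint ℂ) = 2 / Real.sqrt (1 + ‖w‖ ^ 2) := rfl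
lemma sphDist_infty_infty : sphDist (∞ : OnePoint ℂ) ∞ = 0 := rfl

lemma finPart_coe (v : ℂ) : finPart (v : OnePoint ℂ) = v := rfl
lemma finPart_infty : finPart (∞ : OnePoint ℂ) = 0 := rfl
lemma oinv_infty : oinv (∞ : OnePoint ℂ) = ((0:ℂ) : OnePoint ℂ) := rfl
lemma oinv_coe (v : ℂ) : oinv (v : OnePoint ℂ)
    = if v = 0 then (∞ : OnePoint ℂ) else (((v⁻¹ : ℂ)) : OnePoint ℂ) := rfl

lemma sphDist_zero_coe (w : ℂ) :
    sphDist ((0:ℂ) : OnePoint ℂ) (w : OnePoint ℂ) = 2 * ‖w‖ / Real.sqrt (1 + ‖w‖ ^ 2) := by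
  rw [sphDist_coe_coe]; simp

lemma sphDist_zero_infty : sphDist ((0:ℂ) : OnePoint ℂ) (∞ : OnePoint ℂ) = 2 := by
  rw [sphDist_coe_infty]; simp

lemma finPart_eq_zero_iff (x : OnePoint ℂ) :
    finPart x = 0 ↔ (x = ((0:ℂ) : OnePoint ℂ) ∨ x = ∞) := by
  rcases opc x with h | ⟨v, h⟩ <;> subst h
  · simp [finPart_infty]
  · simp only [finPart_coe]
    constructor
    · intro hv; exact Or.inl (by rw [hv])
    · rintro (h | h)
      · exact OnePoint.coe_injective h
      · exact absurd h (OnePoint.coe_ne_infty v)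

lemma finPart_oinv_eq_zero_iff (x : OnePoint ℂ) :
    finPart (oinv x) = 0 ↔ (x = ((0:ℂ) : OnePoint ℂ) ∨ x = ∞) := by
  rcases opc x with h | ⟨v, h⟩ <;> subst h
  · simp [oinv_infty, finPart_coe]
  · by_cases hv : v = 0
    · subst hv; simp [oinv_coe, finPart_infty]
    · rw [oinv_coe, if_neg hv, finPart_coe]
      simp only [inv_eq_zero, hv, false_iff]
      rintro (h | h)
      · exact hv (OnePoint.coe_injective h)
      · exact OnePoint.coe_ne_infty v h

lemma eq_coe_inv_of_ne (x : OnePoint ℂ) (h : finPart (oinv x) ≠ 0) :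
    x = (((finPart (oinv x))⁻¹ : ℂ) : OnePoint ℂ) := by
  rcases opc x with hx | ⟨v, hx⟩ <;> subst hx
  · exact absurd (by simp [oinv_infty, finPart_coe]) h
  · by_cases hv : v = 0
    · subst hv; exact absurd (by simp [oinv_coe, finPart_infty]) h
    · rw [oinv_coe, if_neg hv, finPart_coe, inv_inv]

-- numeric lemmas

lemma lemBin0 (y : OnePoint ℂ) (h1 : sphDist ((0:ℂ) : OnePoint ℂ) y < 1)
    (h2 : sphDist (∞ : OnePoint ℂ) y < 1) : False := by
  rcases opc y with hy | ⟨w, hy⟩ <;> subst hy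
  · rw [sphDist_zero_infty] at h1; norm_num at h1
  · rw [sphDist_zero_coe] at h1
    rw [sphDist_infty_coe] at h2
    set s := ‖w‖ with hs
    have hs0 : 0 ≤ s := norm_nonneg w
    have hQ : 0 < Real.sqrt (1 + s^2) := Real.sqrt_pos.mpr (by positivity)
    have hQQ : Real.sqrt (1+s^2) * Real.sqrt (1+s^2) = 1+s^2 := Real.mul_self_sqrt (by positivity)
    have hA : 2*s < Real.sqrt (1+s^2) := by rwa [div_lt_one hQ] at h1
    have hB : 2 < Real.sqrt (1+s^2) := by rwa [div_lt_one hQ] at h2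
    have hq1 : (2*s)*(2*s) < Real.sqrt (1+s^2) * Real.sqrt (1+s^2) :=
      mul_lt_mul'' hA hA (by positivity) (by positivity)
    have hq2 : (2:ℝ)*2 < Real.sqrt (1+s^2) * Real.sqrt (1+s^2) :=
      mul_lt_mul'' hB hB (by norm_num) (by norm_num)
    rw [hQQ] at hq1 hq2
    nlinarith

lemma binEq (v₁ v₂ gx : OnePoint ℂ)
    (h₁ : v₁ = ((0:ℂ) : OnePoint ℂ) ∨ v₁ = ∞) (h₂ : v₂ = ((0:ℂ) : OnePoint ℂ) ∨ v₂ = ∞)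
    (d₁ : sphDist v₁ gx < 1) (d₂ : sphDist v₂ gx < 1) : v₁ = v₂ := by
  rcases h₁ with h | h <;> rcases h₂ with h' | h' <;> subst h <;> subst h'
  · rfl
  · exact (lemBin0 gx d₁ d₂).elim
  · exact (lemBin0 gx d₂ d₁).elim
  · rfl

lemma lemNum (x y : OnePoint ℂ) (h1 : sphDist ((0:ℂ) : OnePoint ℂ) y < 1/4)
    (h2 : sphDist x y < 1/4) (h3 : sphDist x ∞ < 1/4) : False := by
  rcases opc y with hy | ⟨w, hy⟩ <;> subst hy
  · rw [sphDist_zero_infty] at h1; norm_num at h1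
  · rw [sphDist_zero_coe] at h1
    set s := ‖w‖ with hsdef
    have hs0 : 0 ≤ s := norm_nonneg w
    have hQ : 0 < Real.sqrt (1+s^2) := Real.sqrt_pos.mpr (by positivity)
    have hQQ : Real.sqrt (1+s^2) * Real.sqrt (1+s^2) = 1+s^2 := Real.mul_self_sqrt (by positivity)
    have hA : 2*s < (1/4) * Real.sqrt (1+s^2) := by
      rw [div_lt_iff₀ hQ] at h1; linarith
    have hs7 : s < 1/7 := by nlinarith [hQ.le, hQQ, hA, hs0, mul_lt_mul'' hA hA (by positivity) (by positivity)]
    have hQle : Real.sqrt (1+s^2) ≤ 3/2 := by nlinarith [hQ.le, hQQ]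
    rcases opc x with hx | ⟨v, hx⟩ <;> subst hx
    · rw [sphDist_infty_coe] at h2
      have hB : 2 < (1/4) * Real.sqrt (1+s^2) := by
        rw [div_lt_iff₀ hQ] at h2; linarith
      nlinarith
    · rw [sphDist_coe_infty] at h3
      set t := ‖v‖ with htdef
      have ht0 : 0 ≤ t := norm_nonneg v
      have hP : 0 < Real.sqrt (1+t^2) := Real.sqrt_pos.mpr (by positivity)
      have hPP : Real.sqrt (1+t^2) * Real.sqrt (1+t^2) = 1+t^2 := Real.mul_self_sqrt (by positivity)
      have hC : 2 < (1/4) * Real.sqrt (1+t^2) := by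
        rw [div_lt_iff₀ hP] at h3; linarith
      have ht7 : 7 < t := by nlinarith [hP.le, hPP]
      have hPt : Real.sqrt (1+t^2) ≤ (8/7)*t := by nlinarith [hP.le, hPP]
      rw [sphDist_coe_coe] at h2
      have hprod : 0 < Real.sqrt (1+t^2) * Real.sqrt (1+s^2) := mul_pos hP hQ
      have hD : 2 * dist v w < (1/4) * (Real.sqrt (1+t^2) * Real.sqrt (1+s^2)) := by
        rw [div_lt_iff₀ hprod] at h2; linarith
      have hdist : t - s ≤ dist v w := by
        rw [dist_eq_norm]
        calc t - s ≤ |t - s| := le_abs_self _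
        _ ≤ ‖v - w‖ := by rw [htdef, hsdef]; exact abs_norm_sub_norm_le v w
      have hPQ : Real.sqrt (1+t^2) * Real.sqrt (1+s^2) ≤ ((8/7)*t) * (3/2) :=
        mul_le_mul hPt hQle hQ.le (by positivity)
      linarith

-- clopen two-valued spreading

lemma twoValuedGlobal (f : ℂ → OnePoint ℂ) (hms : MeroSphere f) (w₀ : ℂ)
    (h₀ : ∀ᶠ u in nhds w₀, f u = ((0:ℂ) : OnePoint ℂ) ∨ f u = ∞) :
    ∀ u, f u = ((0:ℂ) : OnePoint ℂ) ∨ f u = ∞ := by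
  haveI : PreconnectedSpace ℂ := ⟨(convex_univ : Convex ℝ (Set.univ : Set ℂ)).isPreconnected⟩
  set U : Set ℂ := {w | ∀ᶠ u in nhds w, f u = ((0:ℂ) : OnePoint ℂ) ∨ f u = ∞} with hUdef
  have hopen : IsOpen U := isOpen_setOf_eventually_nhds
  have hsub : closure U ⊆ U := by
    intro w hw
    by_cases hwU : w ∈ U
    · exact hwU
    · have hfreq : ∃ᶠ u in nhds w, u ∈ U := mem_closure_iff_frequently.mp hw
      have hfreq' : ∃ᶠ u in nhdsWithin w {w}ᶜ, u ∈ U := by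
        rw [frequently_nhdsWithin_iff]
        exact hfreq.mono (fun u hu => ⟨hu, fun he => hwU (by rw [← Set.mem_singleton_iff.mp he]; exact hu)⟩)
      have main : ∀ F : ℂ → ℂ, AnalyticAt ℂ F w →
          (∀ u, F u = 0 ↔ (f u = ((0:ℂ) : OnePoint ℂ) ∨ f u = ∞)) → w ∈ U := by
        intro F hF hiff
        rcases hF.eventually_eq_zero_or_eventually_ne_zero with hz | hnz
        · exact hz.mono (fun u hu => (hiff u).mp hu)
        · exfalso
          have hfz : ∃ᶠ u in nhdsWithin w {w}ᶜ, F u = 0 :=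
            hfreq'.mono (fun u hu => (hiff u).mpr hu.self_of_nhds)
          obtain ⟨u, hu0, hun⟩ := (hfz.and_eventually hnz).exists
          exact hun hu0
      rcases hms w with ⟨-, hp⟩ | ⟨-, hq⟩
      · exact main _ hp (fun u => finPart_eq_zero_iff (f u))
      · exact main _ hq (fun u => finPart_oinv_eq_zero_iff (f u))
  have hclosed : IsClosed U := isClosed_of_closure_subset hsub
  have huniv : U = Set.univ := by
    rcases isClopen_iff.mp ⟨hclosed, hopen⟩ with h | h
    · exfalso; have : w₀ ∈ U := h₀; rw [h] at this; exact this
    · exact h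
  intro u
  have hu : u ∈ U := by rw [huniv]; trivial
  exact hu.self_of_nhds


lemma twoValuedConst (f : ℂ → OnePoint ℂ)
    (ax2 : ∀ h : ℕ → ℂ, ∃ φ : ℕ → ℕ, StrictMono φ ∧ ∃ g : ℂ → OnePoint ℂ, UnifCompLim f (h ∘ φ) g)
    (htv : ∀ u, f u = ((0:ℂ) : OnePoint ℂ) ∨ f u = ∞) (z p : ℂ) : f z = f p := by
  classical
  set P : ℂ → ℂ → OnePoint ℂ :=
    (fun y x => if ‖x‖ ≤ 1 then f (y + x) else ((0:ℂ) : OnePoint ℂ)) with hPdef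
  have hfin : (Set.range P).Finite := by
    by_contra hinf
    have hinf' : (Set.range P).Infinite := hinf
    set e := hinf'.natEmbedding with hedef
    have hyP : ∀ m : ℕ, ∃ y : ℂ, P y = (e m : ℂ → OnePoint ℂ) := fun m => (e m).2
    choose y hy using hyP
    obtain ⟨φ, hφ, g, HU⟩ := ax2 y
    obtain ⟨N, hN⟩ := HU (Metric.closedBall 0 1) (isCompact_closedBall 0 1) 1 one_pos
    have hkey : P (y (φ N)) = P (y (φ (N+1))) := by
      funext x
      by_cases hx : ‖x‖ ≤ 1
      · have hx' : x ∈ Metric.closedBall (0:ℂ) 1 := by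
          simpa [Metric.mem_closedBall, dist_zero_right] using hx
        have d1 := hN N le_rfl x hx'
        have d2 := hN (N+1) (Nat.le_succ N) x hx'
        simp only [Function.comp] at d1 d2
        simp only [hPdef, if_pos hx]
        rw [add_comm (y (φ N)) x, add_comm (y (φ (N+1))) x]
        exact binEq _ _ (g x) (htv _) (htv _) d1 d2
      · simp only [hPdef, if_neg hx]
    have heq : e (φ N) = e (φ (N+1)) := Subtype.ext (by rw [← hy (φ N), ← hy (φ (N+1)), hkey])
    have := e.injective heq
    exact absurd this (Nat.ne_of_lt (hφ (Nat.lt_succ_self N)))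
  set n₁ := hfin.toFinset.card with hn₁def
  have hn₁pos : 0 < n₁ := Finset.card_pos.mpr ⟨P 0, hfin.mem_toFinset.mpr (Set.mem_range_self 0)⟩
  have hfac0 : (n₁.factorial : ℝ) ≠ 0 := by
    exact_mod_cast (Nat.factorial_pos n₁).ne'
  have LC : ∀ (y r : ℂ), ‖r‖ ≤ 1/2 → f (y + r) = f y := by
    intro y r hr
    set ρ : ℂ := r / (n₁.factorial : ℂ) with hρdef
    have hρnorm : ‖ρ‖ = ‖r‖ / (n₁.factorial : ℝ) := by
      rw [hρdef, norm_div]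
      norm_num
    have maps : ∀ j ∈ Finset.range (n₁+1), P (y + j • ρ) ∈ hfin.toFinset := by
      intro j _; exact hfin.mem_toFinset.mpr (Set.mem_range_self _)
    obtain ⟨j, hj, j', hj', hne, heq⟩ :=
      Finset.exists_ne_map_eq_of_card_lt_of_maps_to
        (by rw [Finset.card_range]; exact Nat.lt_succ_self n₁) maps
    have core : ∀ j j' : ℕ, j < j' → j' ≤ n₁ → P (y + j • ρ) = P (y + j' • ρ) →
        f (y + r) = f y := by
      intro j j' hjj' hj'le hPeq
      set m := j' - j with hmdef
      have hm1 : 1 ≤ m := by omega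
      have hmn : m ≤ n₁ := by omega
      have hdvd : m ∣ n₁.factorial := Nat.dvd_factorial hm1 hmn
      set k := n₁.factorial / m with hkdef
      have hkm : k * m = n₁.factorial := Nat.div_mul_cancel hdvd
      have hper : ∀ x : ℂ, ‖x‖ ≤ 1 → f (y + j • ρ + x) = f (y + j • ρ + (x + m • ρ)) := by
        intro x hx
        have h1 : P (y + j • ρ) x = P (y + j' • ρ) x := by rw [hPeq]
        simp only [hPdef, if_pos hx] at h1
        rw [h1]
        congr 1
        have hj'' : j' = j + m := by omega
        rw [hj'', add_nsmul]
        ring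
      have hbnd : ∀ i : ℕ, i ≤ k → ‖(-(j • ρ) + i • (m • ρ) : ℂ)‖ ≤ 1 := by
        intro i hik
        have h1 : ‖(-(j • ρ) : ℂ)‖ = (j:ℝ) * ‖ρ‖ := by
          rw [norm_neg, nsmul_eq_mul, norm_mul]
          norm_num
        have h2 : ‖(i • (m • ρ) : ℂ)‖ = ((i*m : ℕ) : ℝ) * ‖ρ‖ := by
          rw [← mul_nsmul', nsmul_eq_mul, norm_mul]
          norm_num
        have hρ0 : 0 ≤ ‖ρ‖ := norm_nonneg _
        have him : ((i*m : ℕ) : ℝ) ≤ (n₁.factorial : ℝ) := by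
          have : i*m ≤ n₁.factorial := by
            calc i*m ≤ k*m := Nat.mul_le_mul_right m hik
            _ = n₁.factorial := hkm
          exact_mod_cast this
        have hjn : (j:ℝ) ≤ (n₁.factorial : ℝ) := by
          have : j ≤ n₁.factorial := le_trans (by omega) (Nat.self_le_factorial n₁)
          exact_mod_cast this
        calc ‖(-(j • ρ) + i • (m • ρ) : ℂ)‖ ≤ ‖(-(j • ρ) : ℂ)‖ + ‖(i • (m • ρ) : ℂ)‖ :=
              norm_add_le _ _
        _ = (j:ℝ) * ‖ρ‖ + ((i*m : ℕ) : ℝ) * ‖ρ‖ := by rw [h1, h2]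
        _ ≤ (n₁.factorial : ℝ) * ‖ρ‖ + (n₁.factorial : ℝ) * ‖ρ‖ := by
              have := mul_le_mul_of_nonneg_right hjn hρ0
              have := mul_le_mul_of_nonneg_right him hρ0
              linarith
        _ = 2 * ((n₁.factorial : ℝ) * (‖r‖ / (n₁.factorial : ℝ))) := by rw [hρnorm]; ring
        _ = 2 * ‖r‖ := by rw [mul_div_cancel₀ _ hfac0]
        _ ≤ 1 := by linarith
      have iter : ∀ i : ℕ, i ≤ k →
          f (y + j • ρ + (-(j • ρ) + i • (m • ρ))) = f (y + j • ρ + -(j • ρ)) := by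
        intro i
        induction i with
        | zero => intro _; simp
        | succ i ih =>
          intro hik
          have hik' : i ≤ k := Nat.le_of_succ_le hik
          have hstep := hper (-(j • ρ) + i • (m • ρ)) (hbnd i hik')
          have harg : (-(j • ρ) + (i+1) • (m • ρ) : ℂ) = (-(j • ρ) + i • (m • ρ)) + m • ρ := by
            rw [succ_nsmul]; ring
          rw [harg, ← hstep]
          exact ih hik'
      have hfinal := iter k le_rfl
      have hkmr : (k • (m • ρ) : ℂ) = r := by
        rw [← mul_nsmul', hkm, nsmul_eq_mul, hρdef]
        exact mul_div_cancel₀ r (by exact_mod_cast Nat.cast_ne_zero.mpr (Nat.factorial_pos n₁).ne' : ((n₁.factorial:ℂ)) ≠ 0)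
      have harg1 : (y + j • ρ + (-(j • ρ) + k • (m • ρ)) : ℂ) = y + r := by rw [hkmr]; ring
      have harg2 : (y + j • ρ + -(j • ρ) : ℂ) = y := by ring
      rw [harg1, harg2] at hfinal
      exact hfinal
    rcases lt_or_gt_of_ne hne with hlt | hlt
    · exact core _ _ hlt (Nat.lt_succ_iff.mp (Finset.mem_range.mp hj')) heq
    · exact core _ _ hlt (Nat.lt_succ_iff.mp (Finset.mem_range.mp hj)) heq.symm
  have chain : ∀ (M : ℕ) (z₀ step : ℂ), ‖step‖ ≤ 1/2 → f (z₀ + M • step) = f z₀ := by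
    intro M z₀ step hstep
    induction M with
    | zero => simp
    | succ M ih =>
      have harg : (z₀ + (M+1) • step : ℂ) = (z₀ + M • step) + step := by
        rw [succ_nsmul]; ring
      rw [harg, LC (z₀ + M • step) step hstep]
      exact ih
  set M : ℕ := ⌈2 * ‖p - z‖⌉₊ + 1 with hMdef
  have hM0 : 0 < M := Nat.succ_pos _
  have hMc : (0:ℝ) < (M:ℝ) := by exact_mod_cast hM0
  have hMge : 2 * ‖p - z‖ ≤ (M:ℝ) := by
    calc 2 * ‖p - z‖ ≤ (⌈2 * ‖p - z‖⌉₊ : ℝ) := Nat.le_ceil _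
    _ ≤ (M:ℝ) := by exact_mod_cast Nat.le_succ _
  set step : ℂ := (p - z) / (M:ℂ) with hstepdef
  have hstepnorm : ‖step‖ ≤ 1/2 := by
    rw [hstepdef, norm_div]
    have hnc : ‖(M:ℂ)‖ = (M:ℝ) := by norm_num
    rw [hnc, div_le_iff₀ hMc]
    linarith
  have hMne : ((M:ℂ)) ≠ 0 := by
    exact Nat.cast_ne_zero.mpr hM0.ne'
  have hfin2 : f (z + M • step) = f z := chain M z step hstepnorm
  have harg : (z + M • step : ℂ) = p := by
    rw [hstepdef, nsmul_eq_mul]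
    field_simp
    ring
  rw [harg] at hfin2
  exact hfin2.symm


/-- For a function in Yosida's class N1, the zeros and poles are uniformly separated. -/
theorem stmt6 (f : ℂ → OnePoint ℂ) (hf : YosidaN1 f)
    (a : ℕ → ℂ) (b : ℕ → ℂ)
    (ha : ∀ n, f (a n) = ((0 : ℂ) : OnePoint ℂ)) (hb : ∀ k, f (b k) = (∞ : OnePoint ℂ)) :
    ∃ δ > (0 : ℝ), ∀ n k, δ ≤ dist (a n) (b k) := by
  classical
  by_contra hcon
  push_neg at hcon
  obtain ⟨hms, ax2, -⟩ := hf
  have hsel : ∀ j : ℕ, ∃ nk : ℕ × ℕ, dist (a nk.1) (b nk.2) < 1/((j:ℝ)+1) := by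
    intro j
    obtain ⟨n, k, hnk⟩ := hcon (1/((j:ℝ)+1)) (by positivity)
    exact ⟨(n, k), hnk⟩
  choose nk hnk using hsel
  obtain ⟨φ, hφ, g, HU⟩ := ax2 (fun j => b (nk j).2)
  obtain ⟨N₀, hN₀⟩ := HU (Metric.closedBall 0 1) (isCompact_closedBall 0 1) (1/4) (by norm_num)
  simp only [Function.comp] at hN₀
  set β : ℂ := b (nk (φ N₀)).2 with hβdef
  have hfβ : f β = ∞ := hb _
  rcases hms β with ⟨hne, -⟩ | ⟨-, hq⟩
  · exact hne hfβ
  rcases hq.eventually_eq_zero_or_eventually_ne_zero with hdeg | hnd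
  · -- degenerate case: f is globally two-valued, hence constant: contradiction
    have h2v : ∀ u, f u = ((0:ℂ) : OnePoint ℂ) ∨ f u = ∞ :=
      twoValuedGlobal f hms β (hdeg.mono (fun u hu => (finPart_oinv_eq_zero_iff (f u)).mp hu))
    have hcc := twoValuedConst f ax2 h2v (a 0) (b 0)
    rw [ha 0, hb 0] at hcc
    exact OnePoint.coe_ne_infty _ hcc
  · -- non-degenerate: spherical continuity at the pole β
    have hq0 : finPart (oinv (f β)) = 0 := by
      rw [hfβ]; rfl
    have hsmall : ∀ᶠ w in nhds β, ‖finPart (oinv (f w))‖ < 1/8 := by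
      have hc : ContinuousAt (fun w => finPart (oinv (f w))) β := hq.continuousAt
      have hball : Metric.ball (0:ℂ) (1/8) ∈ nhds ((fun w => finPart (oinv (f w))) β) := by
        simp only [hq0]
        exact Metric.ball_mem_nhds _ (by norm_num)
      filter_upwards [hc.preimage_mem_nhds hball] with w hw
      simpa [Metric.mem_ball, dist_zero_right] using hw
    have hnd' : ∀ᶠ w in nhds β, w ≠ β → finPart (oinv (f w)) ≠ 0 := by
      have := eventually_nhdsWithin_iff.mp hnd
      exact this.mono (fun w hw hwne => hw hwne)
    have hcont : ∀ᶠ w in nhds β, sphDist (f w) ∞ < 1/4 := by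
      filter_upwards [hsmall, hnd'] with w h1 h2
      by_cases hwβ : w = β
      · rw [hwβ, hfβ, sphDist_infty_infty]; norm_num
      · have hqw : finPart (oinv (f w)) ≠ 0 := h2 hwβ
        have hfw := eq_coe_inv_of_ne (f w) hqw
        rw [hfw, sphDist_coe_infty]
        set c : ℝ := ‖finPart (oinv (f w))‖ with hcdef
        have hc0 : (0:ℝ) < c := by
          rw [hcdef]; exact norm_pos_iff.mpr hqw
        have hninv : ‖(finPart (oinv (f w)))⁻¹‖ = c⁻¹ := by rw [hcdef, norm_inv]
        rw [hninv]
        have hsq : (c⁻¹ : ℝ) ≤ Real.sqrt (1 + (c⁻¹)^2) := by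
          rw [show (c⁻¹ : ℝ) = Real.sqrt ((c⁻¹)^2) from (Real.sqrt_sq (by positivity)).symm]
          exact Real.sqrt_le_sqrt (by nlinarith [Real.sq_sqrt (by positivity : (0:ℝ) ≤ (c⁻¹)^2)])
        have hpos : (0:ℝ) < c⁻¹ := by positivity
        have h2c : 2 / Real.sqrt (1 + (c⁻¹)^2) ≤ 2 / c⁻¹ := by
          apply div_le_div_of_nonneg_left (by norm_num) hpos hsq
        have h2c' : 2 / c⁻¹ = 2 * c := by field_simp
        have : 2 * c < 1/4 := by linarith
        calc 2 / Real.sqrt (1 + (c⁻¹)^2) ≤ 2 / c⁻¹ := h2c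
        _ = 2 * c := h2c'
        _ < 1/4 := this
    obtain ⟨δ, hδ0, hδ⟩ := Metric.eventually_nhds_iff.mp hcont
    obtain ⟨J, hJ⟩ := exists_nat_gt (1/δ)
    set j₀ := max N₀ J with hj₀def
    set α : ℂ := a (nk (φ j₀)).1 with hαdef
    set βj : ℂ := b (nk (φ j₀)).2 with hβjdef
    set ept : ℂ := α - βj with heptdef
    have hesmall : ‖ept‖ < 1/((j₀:ℝ)+1) := by
      rw [heptdef, ← dist_eq_norm]
      calc dist α βj < 1/((φ j₀ : ℝ)+1) := hnk (φ j₀)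
      _ ≤ 1/((j₀:ℝ)+1) := by
        apply one_div_le_one_div_of_le (by positivity)
        have : j₀ ≤ φ j₀ := hφ.le_apply
        exact_mod_cast (by omega : j₀ + 1 ≤ φ j₀ + 1)
    have hone : 1/((j₀:ℝ)+1) ≤ 1 := by
      rw [div_le_one (by positivity)]
      have : (0:ℝ) ≤ (j₀:ℝ) := Nat.cast_nonneg j₀
      linarith
    have heK : ept ∈ Metric.closedBall (0:ℂ) 1 := by
      rw [Metric.mem_closedBall, dist_zero_right]
      linarith
    have heδ : ‖ept‖ < δ := by
      have h1 : 1/((j₀:ℝ)+1) < δ := by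
        have hj : (J:ℝ) ≤ (j₀:ℝ) := by
          exact_mod_cast Nat.cast_le.mpr (le_max_right N₀ J)
        have h2 : 1/δ < (j₀:ℝ)+1 := by linarith
        rw [div_lt_iff₀ (by positivity)]
        calc (1:ℝ) = δ * (1/δ) := by field_simp
        _ < δ * ((j₀:ℝ)+1) := by exact mul_lt_mul_of_pos_left h2 hδ0
      linarith
    have H1 : sphDist ((0:ℂ) : OnePoint ℂ) (g ept) < 1/4 := by
      have hh := hN₀ j₀ (le_max_left N₀ J) ept heK
      have harg : (ept + b (nk (φ j₀)).2 : ℂ) = α := by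
        rw [heptdef]; ring
      rw [harg, hαdef, ha] at hh
      exact hh
    have H2 : sphDist (f (ept + β)) (g ept) < 1/4 := hN₀ N₀ le_rfl ept heK
    have H3 : sphDist (f (ept + β)) ∞ < 1/4 := by
      apply hδ
      have : dist (ept + β) β = ‖ept‖ := by
        rw [dist_eq_norm]; congr 1; ring
      rw [this]; exact heδ
    exact lemNum _ _ H1 H2 H3
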